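/- The 4-dimensional spined cube SQ_4 is isomorphic to the bi-Cayley graph of H = (Z/2)^3 = ⟨a_1⟩ × ⟨a_2⟩ × ⟨a_3⟩ with respect to T_11 = {a_1, a_2, a_3}, T_22 = {a_1a_2, a_2a_3, a_3}, T_12 = {1}. -/
import Mathlib


/-- The "difference vector" of the neighbor rules of the spined cube, `i` being the
0-based index of the flipped bit. -/
def sqDelta (n : ℕ) (x : Fin n → ZMod 2) (i : Fin n) : Fin n → ZMod 2 :=
  fun j =>
    (if j = i then 1 else 0) +
    (if i.val + 5 ≤ n then
      (if j.val = i.val + 1 then x ⟨n - 2, by have := i.isLt; omega⟩ else 0) +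
      (if j.val = i.val + 2 then x ⟨n - 1, by have := i.isLt; omega⟩ else 0)
    else if n ≤ i.val + 2 then 0
    else (if j.val = i.val + 1 then x ⟨n - 1, by have := i.isLt; omega⟩ else 0))

/-- The `n`-dimensional spined cube `SQ_n`. -/
def spinedCube (n : ℕ) : SimpleGraph (Fin n → ZMod 2) :=
  SimpleGraph.fromRel (fun x y => ∃ i : Fin n, y = x + sqDelta n x i)
/-- The bi-Cayley graph of an additive group `H` with respect to `T₁₁, T₂₂, T₁₂`:
vertices are `H × {0,1}` (the two copies of `H`), with `(h,i)` adjacent to `(g,j)`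
iff `g - h` lies in `T i j` (symmetrized). -/
def biCayleyGraph (H : Type*) [AddGroup H] (T11 T22 T12 : Set H) :
    SimpleGraph (H × Fin 2) :=
  SimpleGraph.fromRel (fun p q =>
    (p.2 = 0 ∧ q.2 = 0 ∧ q.1 - p.1 ∈ T11) ∨
    (p.2 = 1 ∧ q.2 = 1 ∧ q.1 - p.1 ∈ T22) ∨
    (p.2 = 0 ∧ q.2 = 1 ∧ q.1 - p.1 ∈ T12))

/-- `SQ_4` is isomorphic to the bi-Cayley graph of `H = (ℤ/2)³` with respect to
`T₁₁ = {a₁, a₂, a₃}`, `T₂₂ = {a₁a₂, a₂a₃, a₃}`, `T₁₂ = {1}`, where the `aᵢ` are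
the standard basis vectors. -/
def sq4Equiv : (Fin 4 → ZMod 2) ≃ ((Fin 3 → ZMod 2) × Fin 2) where
  toFun x := (fun j => x j.castSucc, (x 3 : Fin 2))
  invFun p := Fin.snoc p.1 (p.2 : ZMod 2)
  left_inv := by decide
  right_inv := by decide

set_option synthInstance.maxSize 20000 in
lemma sq4_key : ∀ a b, (biCayleyGraph (Fin 3 → ZMod 2)
      {Pi.single 0 1, Pi.single 1 1, Pi.single 2 1}
      {Pi.single 0 1 + Pi.single 1 1, Pi.single 1 1 + Pi.single 2 1, Pi.single 2 1}
      {0}).Adj (sq4Equiv a) (sq4Equiv b) ↔ (spinedCube 4).Adj a b := by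
  intro a b
  simp only [biCayleyGraph, spinedCube, SimpleGraph.fromRel_adj, Set.mem_insert_iff,
    Set.mem_singleton_iff]
  revert a b
  decide

theorem sq4_iso_biCayley :
    Nonempty (spinedCube 4 ≃g biCayleyGraph (Fin 3 → ZMod 2)
      {Pi.single 0 1, Pi.single 1 1, Pi.single 2 1}
      {Pi.single 0 1 + Pi.single 1 1, Pi.single 1 1 + Pi.single 2 1, Pi.single 2 1}
      {0}) := by
  exact ⟨{ sq4Equiv with map_rel_iff' := fun {a b} => sq4_key a b }⟩
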